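/- Let B be a ring and M a right B-module. Then M is a quasi-Baer module over B if and only if the polynomial module M[x] is a quasi-Baer module over B[x]. Moreover, in this case M is quasi-Armendariz. -/

import Mathlib

open Polynomial MulOpposite

/-- The polynomial module `M[x]` over `Bᵐᵒᵖ[X]`, for a right `B`-module `M`
(encoded as a left `Bᵐᵒᵖ`-module). -/
noncomputable def polyModAux (B : Type*) [Ring B] (M : Type*) [AddCommGroup M]
    [Module Bᵐᵒᵖ M] : Module (Polynomial Bᵐᵒᵖ) (ℕ →₀ M) :=
  Module.compHom _
    (Polynomial.eval₂RingHom' (Module.toAddMonoidEnd Bᵐᵒᵖ (ℕ →₀ M))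
      (Finsupp.mapDomain.addMonoidHom Nat.succ : AddMonoid.End (ℕ →₀ M))
      (fun a => AddMonoidHom.ext fun p => (Finsupp.mapDomain_smul a p).symm))

/-- `M[x]` as a right `B[x]`-module, i.e. a left module over `(B[x])ᵐᵒᵖ`. -/
noncomputable def polyModOp (B : Type*) [Ring B] (M : Type*) [AddCommGroup M]
    [Module Bᵐᵒᵖ M] : Module (Polynomial B)ᵐᵒᵖ (ℕ →₀ M) :=
  letI := polyModAux B M
  Module.compHom _ (Polynomial.opRingEquiv B).toRingHom

/-- The right action `m(x) · f(x)` of `B[x]` on the polynomial module `M[x]`. -/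
noncomputable def rsmul (B : Type*) [Ring B] (M : Type*) [AddCommGroup M]
    [Module Bᵐᵒᵖ M] (p : ℕ →₀ M) (f : Polynomial B) : ℕ →₀ M := by
  letI := polyModOp B M
  exact op f • p

/-- The annihilator in `S` of a subset `X` of a right `S`-module `N`:
`ann_S(X) = {r : S | Xr = 0}`. -/
def rAnn (S : Type*) [Ring S] {N : Type*} [AddCommGroup N] [Module Sᵐᵒᵖ N]
    (X : Set N) : Set S :=
  {r : S | ∀ x ∈ X, op r • x = 0}

/-- `C` is the right ideal `eS` generated by an idempotent `e` of `S`. -/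
def IsIdempotentGenerated (S : Type*) [Ring S] (C : Set S) : Prop :=
  ∃ e : S, e * e = e ∧ C = {x : S | ∃ b : S, x = e * b}

/-- A right `B`-module `M` is quasi-Armendariz if `m(x) B[x] f(x) = 0` implies
`m_i B b_j = 0` for all coefficients `m_i` of `m(x)` and `b_j` of `f(x)`. -/
def RQuasiArmendariz (B : Type*) [Ring B] (M : Type*) [AddCommGroup M]
    [Module Bᵐᵒᵖ M] : Prop :=
  ∀ (p : ℕ →₀ M) (f : Polynomial B),
    (∀ h : Polynomial B, rsmul B M p (h * f) = 0) →
      ∀ (i j : ℕ) (r : B), op (f.coeff j) • (op r • p i) = 0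

/-- A right `S`-module `N` is quasi-Baer if the annihilator of every submodule of `N` is
generated by an idempotent. -/
def IsQuasiBaerMod (S : Type*) [Ring S] (N : Type*) [AddCommGroup N]
    [Module Sᵐᵒᵖ N] : Prop :=
  ∀ X : Submodule Sᵐᵒᵖ N, IsIdempotentGenerated S (rAnn S (X : Set N))

/-! ### Auxiliary lemmas -/

section Aux
variable {B : Type*} [Ring B] {M : Type*} [AddCommGroup M] [Module Bᵐᵒᵖ M]

/-- The shift endomorphism of `ℕ →₀ M`. -/
noncomputable abbrev shiftE (B : Type*) [Ring B] (M : Type*) [AddCommGroup M]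
    [Module Bᵐᵒᵖ M] : AddMonoid.End (ℕ →₀ M) :=
  (Finsupp.mapDomain.addMonoidHom Nat.succ : AddMonoid.End (ℕ →₀ M))

lemma shiftE_apply (r : ℕ →₀ M) (k : ℕ) :
    (shiftE B M r) k = if k = 0 then 0 else r (k - 1) := by
  show (Finsupp.mapDomain Nat.succ r) k = _
  cases k with
  | zero =>
    rw [if_pos rfl, Finsupp.mapDomain_notin_range]
    rintro ⟨a, ha⟩
    exact Nat.succ_ne_zero a ha
  | succ k =>
    rw [if_neg (Nat.succ_ne_zero k),
      show (k + 1 : ℕ) = Nat.succ k from rfl,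
      Finsupp.mapDomain_apply Nat.succ_injective]
    rfl

lemma shiftE_pow_apply (j : ℕ) (q : ℕ →₀ M) (n : ℕ) :
    ((shiftE B M ^ j) q) n = if j ≤ n then q (n - j) else 0 := by
  induction j generalizing n with
  | zero => simp
  | succ j ih =>
    rw [pow_succ']
    have h1 : ((shiftE B M * shiftE B M ^ j) q) = shiftE B M ((shiftE B M ^ j) q) := rfl
    rw [h1, shiftE_apply, ih]
    by_cases hn : n = 0
    · subst hn; simp
    by_cases hj : j + 1 ≤ n
    · rw [if_neg hn, if_pos (by omega), if_pos hj]
      congr 1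
      omega
    · rw [if_neg hn, if_neg (by omega), if_neg hj]

/-- Coefficient formula for the right action of `B[x]` on `M[x]`. -/
lemma rsmul_apply (p : ℕ →₀ M) (f : Polynomial B) (n : ℕ) :
    rsmul B M p f n = ∑ j ∈ Finset.range (n+1), op (f.coeff j) • p (n - j) := by
  have h0 : rsmul B M p f = Polynomial.eval₂ (Module.toAddMonoidEnd Bᵐᵒᵖ (ℕ →₀ M))
      (shiftE B M) ((Polynomial.opRingEquiv B) (op f)) p := rfl
  set q := (Polynomial.opRingEquiv B) (op f) with hq
  set N := max (n+1) (q.natDegree + 1) with hN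
  have h4 : Polynomial.eval₂ (Module.toAddMonoidEnd Bᵐᵒᵖ (ℕ →₀ M)) (shiftE B M) q
      = ∑ i ∈ Finset.range N, Module.toAddMonoidEnd Bᵐᵒᵖ (ℕ →₀ M) (q.coeff i) * shiftE B M ^ i :=
    Polynomial.eval₂_eq_sum_range' _ (lt_of_lt_of_le (Nat.lt_succ_self _) (le_max_right _ _)) _
  rw [h0, h4]
  have h2 : ∀ (s : Finset ℕ) (g : ℕ → AddMonoid.End (ℕ →₀ M)),
      ((∑ i ∈ s, g i) p) n = ∑ i ∈ s, (g i p) n := by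
    intro s g
    induction s using Finset.induction_on with
    | empty => rfl
    | insert _ _ hx ih =>
      rw [Finset.sum_insert hx, Finset.sum_insert hx, ← ih]
      rfl
  rw [h2]
  have h3 : ∀ j, ((Module.toAddMonoidEnd Bᵐᵒᵖ (ℕ →₀ M) (q.coeff j) * shiftE B M ^ j) p) n
      = op (f.coeff j) • (if j ≤ n then p (n - j) else 0) := by
    intro j
    have : ((Module.toAddMonoidEnd Bᵐᵒᵖ (ℕ →₀ M) (q.coeff j) * shiftE B M ^ j) p) n
        = (q.coeff j • ((shiftE B M ^ j) p)) n := rfl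
    rw [this, Finsupp.smul_apply, shiftE_pow_apply, hq, Polynomial.coeff_opRingEquiv, unop_op]
  rw [Finset.sum_congr rfl (fun j _ => h3 j)]
  rw [← Finset.sum_subset (Finset.range_subset_range.2 (le_max_left (n+1) (q.natDegree+1)))]
  · refine Finset.sum_congr rfl (fun j hj => ?_)
    rw [Finset.mem_range] at hj
    rw [if_pos (by omega : j ≤ n)]
  · intro j hj hj2
    rw [if_neg (by simp at hj2 ⊢; omega), smul_zero]

/-- Key lemma: quasi-Baer implies the quasi-Armendariz condition, formulated
coefficientwise, proved by strong induction. -/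
lemma qa_key (hQB : IsQuasiBaerMod B M) :
    ∀ (N : ℕ) (p : ℕ →₀ M) (f : Polynomial B),
      p.support.sup id + f.natDegree ≤ N →
      (∀ (r : B) (n : ℕ),
        ∑ j ∈ Finset.range (n+1), op (f.coeff j) • (op r • p (n - j)) = 0) →
      ∀ (i j : ℕ) (r : B), op (f.coeff j) • (op r • p i) = 0 := by
  intro N
  induction N using Nat.strong_induction_on with
  | _ N IH =>
  intro p f hm hA i j r
  by_cases hp : p = 0
  · simp [hp]
  by_cases hf : f = 0
  · simp [hf]
  obtain ⟨s, hs_mem, hs_eq⟩ := Finset.exists_mem_eq_sup p.support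
    (Finsupp.support_nonempty_iff.2 hp) id
  have hps : ∀ k, s < k → p k = 0 := by
    intro k hk
    by_contra hpk
    have : id k ≤ p.support.sup id := Finset.le_sup (Finsupp.mem_support_iff.2 hpk)
    rw [hs_eq] at this
    exact absurd this (by simpa using hk.not_ge)
  set t := f.natDegree with ht
  have hft : ∀ k, t < k → f.coeff k = 0 := fun k hk => f.coeff_eq_zero_of_natDegree_lt hk
  have hstep1 : ∀ r : B, op (f.coeff t) • (op r • p s) = 0 := by
    intro r
    have h := hA r (s + t)
    rw [Finset.sum_eq_single t
      (fun b hb hbt => by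
        rcases Nat.lt_or_ge b t with h1 | h1
        · rw [hps (s + t - b) (by omega), smul_zero, smul_zero]
        · rw [hft b (by omega), op_zero, zero_smul])
      (fun h => absurd (Finset.mem_range.2 (by omega)) h)] at h
    rwa [Nat.add_sub_cancel] at h
  obtain ⟨e, he2, heq⟩ := hQB (Submodule.span Bᵐᵒᵖ {p s})
  have he_mem : e ∈ rAnn B ((Submodule.span Bᵐᵒᵖ {p s} : Submodule Bᵐᵒᵖ M) : Set M) := by
    rw [heq]; exact ⟨1, (mul_one e).symm⟩
  have he_ann : ∀ r : B, op e • (op r • p s) = 0 := by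
    intro r
    exact he_mem _ (Submodule.smul_mem _ (op r) (Submodule.mem_span_singleton_self _))
  have hbt_mem : f.coeff t ∈ rAnn B ((Submodule.span Bᵐᵒᵖ {p s} : Submodule Bᵐᵒᵖ M) : Set M) := by
    intro x hx
    obtain ⟨c, rfl⟩ := Submodule.mem_span_singleton.1 hx
    rw [← op_unop c]
    exact hstep1 (unop c)
  have hebt : e * f.coeff t = f.coeff t := by
    rw [heq] at hbt_mem
    obtain ⟨c, hc⟩ := hbt_mem
    rw [hc, ← mul_assoc, he2]
  set p' := p.erase s with hp'def
  have hterm : ∀ (r : B) (i j : ℕ),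
      op ((C e * f).coeff j) • (op r • p' i) = op (f.coeff j) • (op (r * e) • p i) := by
    intro r i j
    rw [coeff_C_mul, op_mul, mul_smul, op_mul, mul_smul]
    congr 1
    by_cases his : i = s
    · subst his
      rw [hp'def, Finsupp.erase_same, smul_zero, smul_zero, he_ann]
    · rw [hp'def, Finsupp.erase_ne his]
  have hA' : ∀ (r : B) (n : ℕ),
      ∑ j ∈ Finset.range (n+1), op ((C e * f).coeff j) • (op r • p' (n - j)) = 0 := by
    intro r n
    rw [Finset.sum_congr rfl (fun j _ => hterm r (n - j) j)]
    exact hA (r * e) n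
  have hcall : ∀ (i j : ℕ) (r : B), op ((C e * f).coeff j) • (op r • p' i) = 0 := by
    by_cases hp'0 : p' = 0
    · simp [hp'0]
    · obtain ⟨s', hs'_mem, hs'_eq⟩ := Finset.exists_mem_eq_sup p'.support
        (Finsupp.support_nonempty_iff.2 hp'0) id
      have hs'lt : s' < s := by
        rw [hp'def, Finsupp.support_erase] at hs'_mem
        have h1 : s' ∈ p.support := Finset.mem_of_mem_erase hs'_mem
        have h2 : s' ≠ s := Finset.ne_of_mem_erase hs'_mem
        have h3 : id s' ≤ p.support.sup id := Finset.le_sup h1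
        rw [hs_eq] at h3
        exact lt_of_le_of_ne h3 h2
      have hdeg : (C e * f).natDegree ≤ t := natDegree_C_mul_le e f
      have hmeas : p'.support.sup id + (C e * f).natDegree < N := by
        rw [hs'_eq]
        have h5 : p.support.sup id + f.natDegree ≤ N := hm
        rw [hs_eq] at h5
        simp only [id] at *
        omega
      exact IH _ hmeas p' (C e * f) le_rfl hA'
  have hCe : ∀ (i j : ℕ) (r : B), op ((C e * f).coeff j) • (op r • p i) = 0 := by
    intro i j r
    by_cases his : i = s
    · subst his
      rw [coeff_C_mul, op_mul, mul_smul, he_ann, smul_zero]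
    · have := hcall i j r
      rwa [hp'def, Finsupp.erase_ne his] at this
  have hbt_all : ∀ (i : ℕ) (r : B), op (f.coeff t) • (op r • p i) = 0 := by
    intro i r
    have := hCe i t r
    rwa [coeff_C_mul, hebt] at this
  set f' := f.erase t with hf'def
  have hAf' : ∀ (r : B) (n : ℕ),
      ∑ j ∈ Finset.range (n+1), op (f'.coeff j) • (op r • p (n - j)) = 0 := by
    intro r n
    have h6 : ∀ j, op (f'.coeff j) • (op r • p (n - j))
        = op (f.coeff j) • (op r • p (n - j)) -
          (if j = t then op (f.coeff t) • (op r • p (n - j)) else 0) := by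
      intro j
      rw [hf'def, Polynomial.coeff_erase]
      by_cases hjt : j = t
      · subst hjt; simp
      · simp [hjt]
    rw [Finset.sum_congr rfl (fun j _ => h6 j), Finset.sum_sub_distrib, hA r n, zero_sub,
      neg_eq_zero]
    refine Finset.sum_eq_zero (fun j _ => ?_)
    by_cases hjt : j = t
    · subst hjt
      rw [if_pos rfl]
      exact hbt_all (n - t) r
    · rw [if_neg hjt]
  have hcall2 : ∀ (i j : ℕ) (r : B), op (f'.coeff j) • (op r • p i) = 0 := by
    by_cases hf'0 : f' = 0
    · simp [hf'0]
    · have hzero : ∀ k, t ≤ k → f'.coeff k = 0 := by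
        intro k hk
        rw [hf'def, Polynomial.coeff_erase]
        rcases eq_or_lt_of_le hk with h1 | h1
        · rw [if_pos h1.symm]
        · rw [if_neg (by omega), hft k h1]
      have hdeg' : f'.natDegree < t := by
        by_contra h
        push_neg at h
        have := hzero f'.natDegree h
        exact hf'0 (Polynomial.leadingCoeff_eq_zero.1 this)
      have hmeas : p.support.sup id + f'.natDegree < N := by
        rw [hs_eq] at hm ⊢
        simp only [id] at *
        omega
      exact IH _ hmeas p f' le_rfl hAf'
  by_cases hjt : j = t
  · subst hjt; exact hbt_all i r
  · have := hcall2 i j r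
    rwa [hf'def, Polynomial.coeff_erase, if_neg hjt] at this

/-- An element of `B` annihilating a set `S` "stably" annihilates its span. -/
lemma ann_span_of (b : B) (S : Set M) (hb : ∀ x ∈ S, ∀ c : Bᵐᵒᵖ, op b • (c • x) = 0) :
    ∀ x ∈ Submodule.span Bᵐᵒᵖ S, op b • x = 0 := by
  intro x hx
  have key : ∀ c : Bᵐᵒᵖ, op b • (c • x) = 0 := by
    induction hx using Submodule.span_induction with
    | mem x hxS => exact hb x hxS
    | zero => intro c; rw [smul_zero, smul_zero]
    | add x y _ _ ihx ihy => intro c; rw [smul_add, smul_add, ihx c, ihy c, add_zero]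
    | smul c x _ ih => intro c'; rw [show c' • c • x = (c' * c) • x from (mul_smul c' c x).symm]; exact ih (c' * c)
  have h := key 1
  rwa [one_smul] at h

/-- Quasi-Baer implies quasi-Armendariz. -/
lemma qb_imp_qa (hQB : IsQuasiBaerMod B M) : RQuasiArmendariz B M := by
  intro p f hh i j r
  refine qa_key hQB (p.support.sup id + f.natDegree) p f le_rfl ?_ i j r
  intro r n
  have h := Finsupp.ext_iff.1 (hh (C r)) n
  rw [rsmul_apply] at h
  calc ∑ j ∈ Finset.range (n+1), op (f.coeff j) • (op r • p (n - j))
      = ∑ j ∈ Finset.range (n+1), op ((C r * f).coeff j) • p (n - j) := by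
        refine Finset.sum_congr rfl (fun j _ => ?_)
        rw [coeff_C_mul, op_mul, mul_smul]
    _ = 0 := by rw [h]; rfl

end Aux

/-- `M` is a quasi-Baer right `B`-module if and only if `M[x]` is a quasi-Baer right
`B[x]`-module; in this case `M` is quasi-Armendariz. -/
theorem stmt18 {B : Type*} [Ring B] {M : Type*} [AddCommGroup M] [Module Bᵐᵒᵖ M] :
    letI := polyModOp B M
    ((IsQuasiBaerMod B M ↔ IsQuasiBaerMod (Polynomial B) (ℕ →₀ M)) ∧
      (IsQuasiBaerMod B M → RQuasiArmendariz B M)) := by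
  letI := polyModOp B M
  have hsmul : ∀ (q : ℕ →₀ M) (f : Polynomial B), op f • q = rsmul B M q f := fun _ _ => rfl
  refine ⟨⟨?_, ?_⟩, fun hQB => qb_imp_qa hQB⟩
  · -- M quasi-Baer → M[x] quasi-Baer
    intro hQB Y
    set Sset : Set M := {m : M | ∃ q ∈ Y, ∃ i : ℕ, q i = m} with hSset
    set X := Submodule.span Bᵐᵒᵖ Sset with hX
    obtain ⟨e, he2, heq⟩ := hQB X
    have he_mem : e ∈ rAnn B (X : Set M) := by
      rw [heq]; exact ⟨1, (mul_one e).symm⟩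
    have he_kill : ∀ q ∈ Y, ∀ i : ℕ, op e • q i = 0 := by
      intro q hq i
      exact he_mem _ (Submodule.subset_span ⟨q, hq, i, rfl⟩)
    refine ⟨C e, by rw [← C_mul, he2], Set.ext fun f => ?_⟩
    constructor
    · intro hf
      refine ⟨f, ?_⟩
      have hcoeff : ∀ j : ℕ, f.coeff j ∈ rAnn B (X : Set M) := by
        intro j
        intro x hx
        refine ann_span_of (f.coeff j) Sset ?_ x hx
        rintro x ⟨q, hq, i, rfl⟩ c
        have hqa : ∀ h : Polynomial B, rsmul B M q (h * f) = 0 := by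
          intro h
          rw [← hsmul, op_mul, mul_smul, hsmul]
          have hmem : rsmul B M q h ∈ Y := by
            rw [← hsmul]
            exact Submodule.smul_mem Y (op h) hq
          rw [hsmul]
          exact hf _ hmem
        have := qb_imp_qa hQB q f hqa i j (unop c)
        rwa [op_unop] at this
      have : C e * f = f := by
        ext j
        rw [coeff_C_mul]
        obtain ⟨c, hc⟩ := heq ▸ hcoeff j
        rw [hc, ← mul_assoc, he2]
      exact this.symm
    · rintro ⟨g, rfl⟩ q hq
      rw [hsmul]
      ext n
      rw [rsmul_apply]
      refine Finset.sum_eq_zero (fun j _ => ?_)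
      rw [coeff_C_mul, op_mul, mul_smul, he_kill q hq, smul_zero]
  · -- M[x] quasi-Baer → M quasi-Baer
    intro hQBx X
    set Y : Submodule (Polynomial B)ᵐᵒᵖ (ℕ →₀ M) :=
      { carrier := {q : ℕ →₀ M | ∀ i : ℕ, q i ∈ X}
        add_mem' := fun hq hq' i => X.add_mem (hq i) (hq' i)
        zero_mem' := fun i => X.zero_mem
        smul_mem' := by
          intro c q hq
          intro n
          have : (c • q) = rsmul B M q (unop c) := by
            rw [← hsmul, op_unop]
          rw [this, rsmul_apply]
          exact X.sum_mem (fun j _ => X.smul_mem _ (hq (n - j))) } with hY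
    obtain ⟨E, hE2, hEeq⟩ := hQBx Y
    have hE_mem : E ∈ rAnn (Polynomial B) (Y : Set (ℕ →₀ M)) := by
      rw [hEeq]; exact ⟨1, (mul_one E).symm⟩
    refine ⟨E.coeff 0, ?_, Set.ext fun b => ?_⟩
    · calc E.coeff 0 * E.coeff 0 = (E * E).coeff 0 := (mul_coeff_zero E E).symm
        _ = E.coeff 0 := by rw [hE2]
    constructor
    · intro hb
      have hCb : C b ∈ rAnn (Polynomial B) (Y : Set (ℕ →₀ M)) := by
        intro q hq
        rw [hsmul]
        ext n
        rw [rsmul_apply]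
        refine Finset.sum_eq_zero (fun j hj => ?_)
        rw [coeff_C]
        by_cases hj0 : j = 0
        · subst hj0
          rw [if_pos rfl]
          have := hb (q n) (hq n)
          simpa using this
        · rw [if_neg hj0, op_zero, zero_smul]
      rw [hEeq] at hCb
      obtain ⟨g, hg⟩ := hCb
      refine ⟨g.coeff 0, ?_⟩
      have := congrArg (fun h : Polynomial B => h.coeff 0) hg
      simpa [mul_coeff_zero] using this
    · rintro ⟨c, rfl⟩ x hx
      have hE0 : op (E.coeff 0) • x = 0 := by
        have hxY : Finsupp.single 0 x ∈ Y := by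
          intro i
          rw [Finsupp.single_apply]
          by_cases hi : (0 : ℕ) = i
          · rw [if_pos hi]; exact hx
          · rw [if_neg hi]; exact X.zero_mem
        have h := hE_mem _ hxY
        rw [hsmul] at h
        have h0 := Finsupp.ext_iff.1 h 0
        rw [rsmul_apply] at h0
        simpa using h0
      rw [op_mul, mul_smul, hE0, smul_zero]
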